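/- Let q = 2^c with c > 1, let G = SL_2(F_q), let U be a Sylow 2-subgroup of G, and let H ≤ U have index 2. For the action of G on the right cosets of H, the maximum size of a minimal base satisfies Base(G, G/H) ≥ c. -/

import Mathlib

def listStab (G : Type*) {Ω : Type*} [Group G] [MulAction G Ω] (l : List Ω) : Subgroup G :=
  ⨅ ω ∈ l, MulAction.stabilizer G ω

def IsBase (G : Type*) {Ω : Type*} [Group G] [MulAction G Ω] (l : List Ω) : Prop :=
  listStab G l = ⊥

def IsIrredundant (G : Type*) {Ω : Type*} [Group G] [MulAction G Ω] (l : List Ω) : Prop :=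
  ∀ k < l.length, listStab G (l.take (k + 1)) < listStab G (l.take k)

def IsMinimalBase (G : Type*) {Ω : Type*} [Group G] [MulAction G Ω] (l : List Ω) : Prop :=
  IsBase G l ∧ ∀ l' : List Ω, l'.Sublist l → l' ≠ l → ¬ IsBase G l'

def IsIndependentSeq (G : Type*) {Ω : Type*} [Group G] [MulAction G Ω] (l : List Ω) : Prop :=
  ∀ k < l.length, listStab G (l.eraseIdx k) ≠ listStab G l

noncomputable def minBaseSize (G Ω : Type*) [Group G] [MulAction G Ω] : ℕ∞ :=
  sInf {n : ℕ∞ | ∃ l : List Ω, IsBase G l ∧ (l.length : ℕ∞) = n}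

noncomputable def maxMinBase (G Ω : Type*) [Group G] [MulAction G Ω] : ℕ∞ :=
  sSup {n : ℕ∞ | ∃ l : List Ω, IsMinimalBase G l ∧ (l.length : ℕ∞) = n}

noncomputable def heightStat (G Ω : Type*) [Group G] [MulAction G Ω] : ℕ∞ :=
  sSup {n : ℕ∞ | ∃ l : List Ω, IsIndependentSeq G l ∧ (l.length : ℕ∞) = n}

noncomputable def irredStat (G Ω : Type*) [Group G] [MulAction G Ω] : ℕ∞ :=
  sSup {n : ℕ∞ | ∃ l : List Ω, IsIrredundant G l ∧ (l.length : ℕ∞) = n}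

open Matrix MulAction Subgroup Module

namespace Stmt8

variable {c : ℕ}

abbrev F (c : ℕ) : Type := GaloisField 2 c

abbrev SL (c : ℕ) : Type := Matrix.SpecialLinearGroup (Fin 2) (F c)

noncomputable def uM (a : F c) : SL c :=
  ⟨!![1, a; 0, 1], by simp [Matrix.det_fin_two_of]⟩

noncomputable def dM (t : (F c)ˣ) : SL c :=
  ⟨!![(t : F c), 0; 0, ((t⁻¹ : (F c)ˣ) : F c)], by simp [Matrix.det_fin_two_of]⟩

@[simp] lemma uM_mul (a b : F c) : uM a * uM b = uM (a + b) := by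
  apply Subtype.ext
  show (uM a).1 * (uM b).1 = _
  simp [uM, Matrix.mul_fin_two, add_comm]

@[simp] lemma uM_zero : (uM 0 : SL c) = 1 := by
  apply Subtype.ext
  show _ = (1 : Matrix (Fin 2) (Fin 2) (F c))
  simp [uM]
  ext i j
  fin_cases i <;> fin_cases j <;> simp

lemma uM_injective : Function.Injective (uM (c := c)) := by
  intro a b h
  have := congrArg (fun m : SL c => m.1 0 1) h
  simpa [uM] using this

@[simp] lemma dM_mul (t s : (F c)ˣ) : dM t * dM s = dM (t * s) := by
  apply Subtype.ext
  show (dM t).1 * (dM s).1 = _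
  simp [dM, Matrix.mul_fin_two, mul_comm]

@[simp] lemma dM_one : (dM 1 : SL c) = 1 := by
  apply Subtype.ext
  show _ = (1 : Matrix (Fin 2) (Fin 2) (F c))
  ext i j
  fin_cases i <;> fin_cases j <;> simp [dM]

@[simp] lemma dM_inv (t : (F c)ˣ) : (dM t)⁻¹ = dM t⁻¹ := by
  rw [inv_eq_iff_mul_eq_one, dM_mul, mul_inv_cancel, dM_one]

lemma dM_mul_uM (t : (F c)ˣ) (a : F c) :
    dM t * uM a = uM ((t : F c) ^ 2 * a) * dM t := by
  apply Subtype.ext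
  show (dM t).1 * (uM a).1 = (uM _).1 * (dM t).1
  simp [dM, uM, Matrix.mul_fin_two, sq]
  have ht : ((t : F c)) ≠ 0 := t.ne_zero
  field_simp

lemma dM_conj_uM (t : (F c)ˣ) (a : F c) :
    dM t * uM a * (dM t)⁻¹ = uM ((t : F c) ^ 2 * a) := by
  rw [dM_mul_uM, mul_assoc, mul_inv_cancel, mul_one]


/-- the homomorphism from the additive group of `F c` to `SL c`. -/
noncomputable def uHom : Multiplicative (F c) →* SL c where
  toFun a := uM (Multiplicative.toAdd a)
  map_one' := uM_zero
  map_mul' a b := by simp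

lemma uHom_injective : Function.Injective (uHom (c := c)) := by
  intro a b h
  exact Multiplicative.toAdd.injective (uM_injective h)

/-- the subgroup of upper unitriangular matrices. -/
noncomputable def U₀ (c : ℕ) : Subgroup (SL c) := (uHom (c := c)).range

lemma mem_U₀ {x : SL c} : x ∈ U₀ c ↔ ∃ a : F c, uM a = x := Iff.rfl

lemma card_U₀ (hc : c ≠ 0) : Nat.card (U₀ c) = 2 ^ c := by
  rw [← GaloisField.card 2 c hc]
  apply Nat.card_congr
  exact ((Equiv.ofInjective _ uHom_injective).symm.trans Multiplicative.toAdd)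


noncomputable def slEquivKer (c : ℕ) :
    SL c ≃ (Matrix.GeneralLinearGroup.det (n := Fin 2) (R := F c)).ker where
  toFun s := ⟨Matrix.SpecialLinearGroup.toGL s, by
    simp [MonoidHom.mem_ker]⟩
  invFun k := ⟨(k.1 : Matrix (Fin 2) (Fin 2) (F c)), by
    have h := k.2
    rw [MonoidHom.mem_ker] at h
    have := congrArg Units.val h
    simpa using this⟩
  left_inv s := Subtype.ext rfl
  right_inv k := Subtype.ext (Units.ext rfl)

lemma det_surjective (c : ℕ) :
    Function.Surjective (Matrix.GeneralLinearGroup.det (n := Fin 2) (R := F c)) := by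
  intro u
  refine ⟨⟨!![(u : F c), 0; 0, 1], !![((u⁻¹ : (F c)ˣ) : F c), 0; 0, 1], ?_, ?_⟩, ?_⟩
  · ext i j
    fin_cases i <;> fin_cases j <;> simp [Matrix.mul_fin_two]
  · ext i j
    fin_cases i <;> fin_cases j <;> simp [Matrix.mul_fin_two]
  · apply Units.ext
    simp [Matrix.det_fin_two_of]

lemma card_SL_mul (hc : c ≠ 0) :
    Nat.card (SL c) * (2 ^ c - 1) = ((2 ^ c) ^ 2 - 1) * ((2 ^ c) ^ 2 - 2 ^ c) := by
  letI : Fintype (F c) := Fintype.ofFinite _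
  have hq : Fintype.card (F c) = 2 ^ c := by
    rw [← Nat.card_eq_fintype_card, GaloisField.card 2 c hc]
  have hGL : Nat.card (GL (Fin 2) (F c)) = ((2 ^ c) ^ 2 - 1) * ((2 ^ c) ^ 2 - 2 ^ c) := by
    rw [Matrix.card_GL_field, hq, Fin.prod_univ_two]
    simp [pow_succ]
  have hker : Nat.card (SL c) =
      Nat.card (Matrix.GeneralLinearGroup.det (n := Fin 2) (R := F c)).ker :=
    Nat.card_congr (slEquivKer c)
  have hindex : (Matrix.GeneralLinearGroup.det (n := Fin 2) (R := F c)).ker.index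
      = 2 ^ c - 1 := by
    rw [Subgroup.index_ker, MonoidHom.range_eq_top_of_surjective _ (det_surjective c)]
    rw [Nat.card_congr (Subgroup.topEquiv.toEquiv), Nat.card_units,
      GaloisField.card 2 c hc]
  rw [hker, ← hindex, Subgroup.card_mul_index, hGL]

lemma card_SL (hc : c ≠ 0) :
    Nat.card (SL c) = 2 ^ c * ((2 ^ c + 1) * (2 ^ c - 1)) := by
  obtain ⟨m, hm⟩ : ∃ m, 2 ^ c = m + 1 :=
    ⟨2 ^ c - 1, (Nat.succ_pred_eq_of_pos (Nat.pow_pos (n := c) (by norm_num))).symm⟩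
  have hmpos : 0 < m := by
    have h2 : 2 ≤ 2 ^ c := by
      calc 2 = 2 ^ 1 := (pow_one 2).symm
      _ ≤ 2 ^ c := Nat.pow_le_pow_right (by norm_num) (Nat.one_le_iff_ne_zero.mpr hc)
    omega
  have key := card_SL_mul hc
  rw [hm] at key ⊢
  have e1 : (m + 1) ^ 2 - 1 = m * (m + 2) := by
    have : (m + 1) ^ 2 = m * (m + 2) + 1 := by ring
    rw [this, Nat.add_sub_cancel]
  have e2 : (m + 1) ^ 2 - (m + 1) = m * (m + 1) := by
    have : (m + 1) ^ 2 = m * (m + 1) + (m + 1) := by ring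
    rw [this, Nat.add_sub_cancel]
  rw [e1, e2] at key
  simp only [Nat.add_sub_cancel] at key ⊢
  apply Nat.eq_of_mul_eq_mul_right hmpos
  rw [key]; ring

lemma factorization_card_SL (hc : c ≠ 0) : (Nat.card (SL c)).factorization 2 = c := by
  have h2 : (2:ℕ) ∣ 2 ^ c := dvd_pow_self 2 hc
  have hge : 2 ≤ 2 ^ c := by
    calc 2 = 2 ^ 1 := (pow_one 2).symm
    _ ≤ 2 ^ c := Nat.pow_le_pow_right (by norm_num) (Nat.one_le_iff_ne_zero.mpr hc)
  rw [card_SL hc, Nat.factorization_mul (by positivity) (Nat.mul_ne_zero (by omega) (by omega)),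
    Nat.factorization_mul (by omega) (by omega)]
  have f1 : (2 ^ c : ℕ).factorization 2 = c := by
    rw [Nat.Prime.factorization_pow Nat.prime_two, Finsupp.single_eq_same]
  have f2 : (2 ^ c + 1 : ℕ).factorization 2 = 0 :=
    Nat.factorization_eq_zero_of_not_dvd (by omega)
  have f3 : (2 ^ c - 1 : ℕ).factorization 2 = 0 :=
    Nat.factorization_eq_zero_of_not_dvd (by omega)
  simp only [Finsupp.coe_add, Pi.add_apply, f1, f2, f3, add_zero]

noncomputable def S₀ (hc : c ≠ 0) : Sylow 2 (SL c) :=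
  Sylow.ofCard (U₀ c) (by rw [card_U₀ hc, factorization_card_SL hc])


lemma mem_listStab {G Ω : Type*} [Group G] [MulAction G Ω] {l : List Ω} {x : G} :
    x ∈ listStab G l ↔ ∀ ω ∈ l, x ∈ MulAction.stabilizer G ω := by
  simp [listStab, Subgroup.mem_iInf]

lemma exists_not_mem_of_proper_sublist {Ω : Type*} {l' l : List Ω} (h : l'.Sublist l)
    (hn : l.Nodup) (hne : l' ≠ l) : ∃ a ∈ l, a ∉ l' := by
  by_contra hcon
  push_neg at hcon
  have hsub : l ⊆ l' := hcon
  have h1 : l'.length ≤ l.length := h.length_le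
  have h2 : l.length ≤ l'.length := by
    classical
    calc l.length = l.toFinset.card := (List.toFinset_card_of_nodup hn).symm
      _ ≤ l'.toFinset.card := Finset.card_le_card (fun a ha => by
          rw [List.mem_toFinset] at ha ⊢; exact hsub ha)
      _ ≤ l'.length := l'.toFinset_card_le
  exact hne (h.eq_of_length (le_antisymm h1 h2))

lemma eq_zero_of_basis_dual {K V ι : Type*} [Field K] [AddCommGroup V] [Module K V]
    [FiniteDimensional K V] [Fintype ι] (B : Basis ι K (Module.Dual K V)) {x : V}
    (h : ∀ i, B i x = 0) : x = 0 := by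
  rw [← Module.forall_dual_apply_eq_zero_iff K x]
  intro f
  rw [← B.sum_repr f]
  simp [h, -Basis.sum_repr]

/-- index-2 subgroups of `U₀` give an additive character of `F c`. -/
lemma exists_phi (H₀ : Subgroup (SL c)) (hrel : H₀.relIndex (U₀ c) = 2) :
    ∃ φ : F c →ₗ[ZMod 2] ZMod 2, ∀ a : F c, φ a = 0 ↔ uM a ∈ H₀ := by
  classical
  have hmemU : ∀ a : F c, uM a ∈ U₀ c := fun a => ⟨Multiplicative.ofAdd a, rfl⟩
  have key : ∀ x y : F c, uM (x + y) ∈ H₀ ↔ (uM x ∈ H₀ ↔ uM y ∈ H₀) := by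
    intro x y
    have := Subgroup.mul_mem_iff_of_index_two (H := H₀.subgroupOf (U₀ c)) hrel
      (a := ⟨uM x, hmemU x⟩) (b := ⟨uM y, hmemU y⟩)
    simpa [Subgroup.mem_subgroupOf, ← uM_mul] using this
  refine ⟨AddMonoidHom.toZModLinearMap 2
    { toFun := fun a => if uM a ∈ H₀ then (0 : ZMod 2) else 1
      map_zero' := by simp [H₀.one_mem]
      map_add' := by
        intro x y
        by_cases h1 : uM x ∈ H₀ <;> by_cases h2 : uM y ∈ H₀ <;>
          simp [key x y, h1, h2] <;> decide }, ?_⟩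
  intro a
  by_cases h : uM a ∈ H₀
  · simp [AddMonoidHom.toZModLinearMap, h]
  · simp only [AddMonoidHom.toZModLinearMap, LinearMap.coe_mk, AddHom.coe_mk,
      AddMonoidHom.coe_mk, ZeroHom.coe_mk, if_neg h]
    constructor
    · intro h1; exact absurd h1 (by decide)
    · intro h1; exact absurd h1 h

/-- a basis of the dual space implemented by multiplier elements `β i`. -/
lemma exists_beta (hc : c ≠ 0) (φ : F c →ₗ[ZMod 2] ZMod 2) (hφ : φ ≠ 0) :
    ∃ (B : Basis (Fin c) (ZMod 2) (Module.Dual (ZMod 2) (F c))) (β : Fin c → F c),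
      (∀ i, β i ≠ 0) ∧ (∀ i x, B i x = φ (β i * x)) ∧ Function.Injective β := by
  classical
  obtain ⟨x₀, hx₀⟩ : ∃ x₀ : F c, φ x₀ ≠ 0 := by
    by_contra hcon
    push_neg at hcon
    exact hφ (LinearMap.ext fun x => hcon x)
  let Φ : F c →ₗ[ZMod 2] Module.Dual (ZMod 2) (F c) :=
    (LinearMap.llcomp (ZMod 2) (F c) (F c) (ZMod 2) φ).comp (LinearMap.mul (ZMod 2) (F c))
  have hΦapp : ∀ β x : F c, Φ β x = φ (β * x) := fun β x => rfl
  have hinj : Function.Injective Φ := by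
    rw [← LinearMap.ker_eq_bot, LinearMap.ker_eq_bot']
    intro β hβ
    by_contra hβne
    have := congrArg (fun f : Module.Dual (ZMod 2) (F c) => f (β⁻¹ * x₀)) hβ
    simp only [hΦapp] at this
    rw [← mul_assoc, mul_inv_cancel₀ hβne, one_mul] at this
    exact hx₀ this
  have hbij : Function.Bijective Φ := ⟨hinj,
    (LinearMap.injective_iff_surjective_of_finrank_eq_finrank
      (Subspace.dual_finrank_eq (V := F c)).symm).mp hinj⟩
  let e : F c ≃ₗ[ZMod 2] Module.Dual (ZMod 2) (F c) := LinearEquiv.ofBijective Φ hbij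
  have hrank : Module.finrank (ZMod 2) (F c) = c := GaloisField.finrank 2 hc
  let b0 : Basis (Fin c) (ZMod 2) (F c) :=
    (Module.finBasis (ZMod 2) (F c)).reindex (finCongr hrank)
  refine ⟨b0.map e, fun i => b0 i, fun i => b0.ne_zero i, fun i x => ?_, b0.injective⟩
  simp [Basis.map_apply, e, LinearEquiv.ofBijective_apply, hΦapp]

end Stmt8


open Stmt8 in
set_option maxHeartbeats 1000000 in
/-- for `q = 2^c` with `c > 1`, `G = SL_2(F_q)`, `U` a Sylow 2-subgroup
and `H ≤ U` of index 2, the action of `G` on the cosets of `H` satisfies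
`Base(G, G/H) ≥ c`. -/
theorem stmt_8 (c : ℕ) (hc : 1 < c)
    (U : Sylow 2 (Matrix.SpecialLinearGroup (Fin 2) (GaloisField 2 c)))
    (H : Subgroup (Matrix.SpecialLinearGroup (Fin 2) (GaloisField 2 c)))
    (hHU : H ≤ (U : Subgroup (Matrix.SpecialLinearGroup (Fin 2) (GaloisField 2 c))))
    (hidx : H.relIndex (U : Subgroup (Matrix.SpecialLinearGroup (Fin 2) (GaloisField 2 c))) = 2) :
    (c : ℕ∞) ≤ maxMinBase (Matrix.SpecialLinearGroup (Fin 2) (GaloisField 2 c))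
      (Matrix.SpecialLinearGroup (Fin 2) (GaloisField 2 c) ⧸ H) := by
  classical
  have hc0 : c ≠ 0 := by omega
  haveI : Finite (Subgroup (SL c)) :=
    Finite.of_injective (fun K : Subgroup (SL c) => (K : Set (SL c))) SetLike.coe_injective
  haveI : Finite (Sylow 2 (SL c)) :=
    Finite.of_injective (fun P : Sylow 2 (SL c) => (P : Subgroup (SL c)))
      (fun P Q h => Sylow.ext h)
  obtain ⟨g, hg⟩ := MulAction.exists_smul_eq (SL c) (S₀ hc0) U
  have hU : ∀ x : SL c, x ∈ (U : Subgroup (SL c)) ↔ g⁻¹ * x * g ∈ U₀ c := by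
    intro x
    rw [← hg, Sylow.smul_def, Sylow.pointwise_smul_def,
      Subgroup.mem_pointwise_smul_iff_inv_smul_mem]
    have h1 : ((MulAut.conj g)⁻¹ : MulAut (SL c)) • x = g⁻¹ * x * g := by
      simp [MulAut.smul_def]
    rw [h1, S₀, Sylow.coe_ofCard]
  set σ : SL c →* SL c := (MulAut.conj g).toMonoidHom with hσdef
  have hσap : ∀ z : SL c, σ z = g * z * g⁻¹ := fun z => rfl
  set H₀ : Subgroup (SL c) := H.comap σ with hH₀def
  have hmemH : ∀ y : SL c, y ∈ H ↔ g⁻¹ * y * g ∈ H₀ := by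
    intro y
    have h1 : σ (g⁻¹ * y * g) = y := by rw [hσap]; group
    rw [hH₀def, Subgroup.mem_comap, h1]
  have hH₀le : H₀ ≤ U₀ c := by
    intro z hz
    have hz1 : σ z ∈ H := hz
    have hz2 := (hU (σ z)).mp (hHU hz1)
    rw [hσap] at hz2
    have : g⁻¹ * (g * z * g⁻¹) * g = z := by group
    rwa [this] at hz2
  have hH₀rel : H₀.relIndex (U₀ c) = 2 := by
    have hUmap : (U₀ c).map σ = (U : Subgroup (SL c)) := by
      ext z
      rw [hσdef, Subgroup.mem_map_equiv, MulAut.conj_symm_apply, hU z]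
    rw [hH₀def, Subgroup.relIndex_comap, hUmap, hidx]
  obtain ⟨φ, hφmem⟩ := exists_phi H₀ hH₀rel
  have hφne : φ ≠ 0 := by
    intro h0
    have hle : U₀ c ≤ H₀ := by
      rintro z ⟨a, rfl⟩
      exact (hφmem (Multiplicative.toAdd a)).mp (by rw [h0]; rfl)
    have : H₀.relIndex (U₀ c) = 1 := Subgroup.relIndex_eq_one.mpr hle
    omega
  obtain ⟨B, β, hβne, hBφ, hβinj⟩ := exists_beta hc0 φ hφne
  have hsq : ∀ i, ∃ t : F c, t ^ 2 = (β i)⁻¹ := by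
    intro i
    refine ⟨(frobeniusEquiv (F c) 2).symm (β i)⁻¹, ?_⟩
    have := frobenius_apply_frobeniusEquiv_symm (R := F c) (p := 2) ((β i)⁻¹)
    simpa [frobenius_def] using this
  choose t ht using hsq
  have htne : ∀ i, t i ≠ 0 := by
    intro i h
    have h2 : (β i)⁻¹ = 0 := by rw [← ht i, h]; ring
    exact hβne i (by simpa using congrArg (fun z : F c => z⁻¹) h2)
  set tu : Fin c → (F c)ˣ := fun i => Units.mk0 (t i) (htne i) with htu
  have htusq : ∀ i, (((tu i)⁻¹ : (F c)ˣ) : F c) ^ 2 = β i := by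
    intro i
    rw [htu]
    simp only [Units.val_inv_eq_inv_val, Units.val_mk0]
    rw [inv_pow, ht i, inv_inv]
  set x : Fin c → SL c := fun i => g * dM (tu i) * g⁻¹ with hx
  set ω : Fin c → (SL c ⧸ H) := fun i => x i • ((1 : SL c) : SL c ⧸ H) with hω
  have stab_mem : ∀ (i : Fin c) (w : SL c),
      w ∈ MulAction.stabilizer (SL c) (ω i) ↔
        (dM (tu i))⁻¹ * (g⁻¹ * w * g) * dM (tu i) ∈ H₀ := by
    intro i w
    rw [hω, MulAction.stabilizer_smul_eq_stabilizer_map_conj, MulAction.stabilizer_quotient,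
      Subgroup.mem_map_equiv, MulAut.conj_symm_apply, hmemH]
    have h2 : g⁻¹ * ((x i)⁻¹ * w * x i) * g
        = (dM (tu i))⁻¹ * (g⁻¹ * w * g) * dM (tu i) := by
      simp only [hx]
      group
    rw [h2]
  have hconj : ∀ (i : Fin c) (b : F c),
      (dM (tu i))⁻¹ * uM b * dM (tu i) = uM (β i * b) := by
    intro i b
    have h1 : (dM ((tu i)⁻¹))⁻¹ = dM (tu i) := by rw [dM_inv, inv_inv]
    rw [dM_inv, ← h1, dM_conj_uM, htusq i]
  have key : ∀ (i : Fin c) (b : F c),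
      ((dM (tu i))⁻¹ * uM b * dM (tu i) ∈ H₀) ↔ B i b = 0 := by
    intro i b
    rw [hconj, ← hφmem, hBφ]
  have hbase : IsBase (SL c) (List.ofFn ω) := by
    rw [IsBase, eq_bot_iff]
    intro w hw
    rw [mem_listStab] at hw
    have hall : ∀ i, (dM (tu i))⁻¹ * (g⁻¹ * w * g) * dM (tu i) ∈ H₀ := by
      intro i
      exact (stab_mem i w).mp (hw (ω i) (by rw [List.mem_ofFn]; exact ⟨i, rfl⟩))
    have hcpos : 0 < c := by omega
    set i0 : Fin c := ⟨0, hcpos⟩ with hi0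
    obtain ⟨a, ha⟩ := hH₀le (hall i0)
    have hw' : g⁻¹ * w * g = uM ((((tu i0) : (F c)ˣ) : F c) ^ 2 * Multiplicative.toAdd a) := by
      have h3 : g⁻¹ * w * g = dM (tu i0) * uM (Multiplicative.toAdd a) * (dM (tu i0))⁻¹ := by
        have ha' : uM (Multiplicative.toAdd a)
            = (dM (tu i0))⁻¹ * (g⁻¹ * w * g) * dM (tu i0) := ha
        rw [ha']
        group
      rw [h3, dM_conj_uM]
    set b : F c := (((tu i0) : (F c)ˣ) : F c) ^ 2 * Multiplicative.toAdd a with hb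
    have hBb : ∀ i, B i b = 0 := by
      intro i
      apply (key i b).mp
      rw [← hw']
      exact hall i
    have hbz : b = 0 := eq_zero_of_basis_dual B hBb
    have hgw : g⁻¹ * w * g = 1 := by rw [hw', hbz, uM_zero]
    have hw1 : w = 1 := by
      have h4 := congrArg (fun z : SL c => g * z * g⁻¹) hgw
      simpa [mul_assoc] using h4
    simp [hw1]
  have hwitness : ∀ i : Fin c, ∃ w : SL c, w ≠ 1 ∧ ∀ j, j ≠ i →
      w ∈ MulAction.stabilizer (SL c) (ω j) := by
    intro i
    letI : Fintype (F c) := Fintype.ofFinite _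
    have hlt : Fintype.card ({j : Fin c // j ≠ i} → ZMod 2) < Fintype.card (F c) := by
      have h2c : Fintype.card (F c) = 2 ^ c := by
        rw [← Nat.card_eq_fintype_card, GaloisField.card 2 c hc0]
      have h1 : Fintype.card {j : Fin c // j ≠ i} = c - 1 := by
        simp [Fintype.card_subtype_compl]
      rw [Fintype.card_fun, h2c, h1]
      have h3 : Fintype.card (ZMod 2) = 2 := by simp
      rw [h3]
      exact Nat.pow_lt_pow_right one_lt_two (by omega)
    obtain ⟨y, z, hyz, hmap⟩ := Fintype.exists_ne_map_eq_of_card_lt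
      (fun v : F c => fun j : {j : Fin c // j ≠ i} => B j.1 v) hlt
    set b : F c := y - z with hbdef
    have hbne : b ≠ 0 := sub_ne_zero_of_ne hyz
    have hBj : ∀ j, j ≠ i → B j b = 0 := by
      intro j hj
      have := congrFun hmap ⟨j, hj⟩
      simp only at this
      rw [hbdef, map_sub, this, sub_self]
    refine ⟨g * uM b * g⁻¹, ?_, ?_⟩
    · intro h1
      have h2 : uM b = 1 := by
        have h3 := congrArg (fun z : SL c => g⁻¹ * z * g) h1
        rw [show g⁻¹ * (g * uM b * g⁻¹) * g = uM b by group] at h3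
        rw [h3]
        group
      exact hbne (uM_injective (by rw [h2, uM_zero]))
    · intro j hj
      rw [stab_mem]
      have h4 : g⁻¹ * (g * uM b * g⁻¹) * g = uM b := by group
      rw [h4, key]
      exact hBj j hj
  have hωinj : Function.Injective ω := by
    intro i j hij
    have hmk : ∀ v : SL c, v • ((1 : SL c) : SL c ⧸ H) = QuotientGroup.mk v := by
      intro v
      show QuotientGroup.mk (v * 1) = QuotientGroup.mk v
      rw [mul_one]
    have h1 : (x i)⁻¹ * (x j) ∈ H := by
      rw [hω] at hij
      simp only [hmk] at hij
      exact (QuotientGroup.eq).mp hij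
    rw [hmemH] at h1
    have h2 : g⁻¹ * ((x i)⁻¹ * x j) * g = dM ((tu i)⁻¹ * tu j) := by
      simp only [hx]
      rw [← dM_mul, ← dM_inv]
      group
    rw [h2] at h1
    obtain ⟨a, ha⟩ := hH₀le h1
    have ha' : uM (Multiplicative.toAdd a) = dM ((tu i)⁻¹ * tu j) := ha
    have hentry := congrArg (fun m : SL c => m.1 0 0) ha'
    simp only [uM, dM] at hentry
    norm_num at hentry
    have hunit : (tu i)⁻¹ * tu j = 1 := Units.ext (by simpa using hentry.symm)
    have htueq : tu i = tu j := by
      rw [inv_mul_eq_one] at hunit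
      exact hunit
    have htij : t i = t j := by
      have := congrArg (fun u : (F c)ˣ => (u : F c)) htueq
      simpa [htu] using this
    have hβij : β i = β j := by
      have h5 : (β i)⁻¹ = (β j)⁻¹ := by rw [← ht i, ← ht j, htij]
      simpa using congrArg (fun z : F c => z⁻¹) h5
    exact hβinj hβij
  have hnodup : (List.ofFn ω).Nodup := List.nodup_ofFn.mpr hωinj
  have hmin : IsMinimalBase (SL c) (List.ofFn ω) := by
    refine ⟨hbase, ?_⟩
    intro l' hsub hne hbase'
    obtain ⟨τ, hτl, hτl'⟩ := exists_not_mem_of_proper_sublist hsub hnodup hne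
    obtain ⟨i, rfl⟩ := List.mem_ofFn.mp hτl
    obtain ⟨w, hw1, hws⟩ := hwitness i
    have hwmem : w ∈ listStab (SL c) l' := by
      rw [mem_listStab]
      intro τ' hτ'
      obtain ⟨j, rfl⟩ := List.mem_ofFn.mp (hsub.subset hτ')
      refine hws j (fun hji => ?_)
      rw [hji] at hτ'
      exact hτl' hτ'
    rw [IsBase] at hbase'
    rw [hbase', Subgroup.mem_bot] at hwmem
    exact hw1 hwmem
  apply le_sSup
  refine ⟨List.ofFn ω, hmin, ?_⟩
  simp
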